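/- Let q₀,...,qₙ be positive integers with gcd 1, δ = lcm(q₀,...,qₙ). The squared Euclidean norm of the cross product w₁ × ⋯ × wₙ of the vectors wᵢ = −(δ/q₀)ê₀ + (δ/qᵢ)êᵢ (i = 1,...,n) equals δ^{2n}(q₀² + q₁² + ⋯ + qₙ²)/(q₀²q₁²⋯qₙ²). -/

import Mathlib

/-- Generalized cross product of `n` vectors in `ℝ^{n+1}`: the `k`-th coordinate is
`(-1)^k` times the `n × n` minor obtained by deleting column `k` from the matrix whose
rows are the given vectors. -/
def crossProd {n : ℕ} (v : Fin n → Fin (n + 1) → ℝ) : Fin (n + 1) → ℝ :=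
  fun k => (-1) ^ (k : ℕ) * Matrix.det (Matrix.of fun i j : Fin n => v i (Fin.succAbove k j))

/-- The vectors `wᵢ = -(δ/q₀)ê₀ + (δ/qᵢ)êᵢ`, `i = 1,...,n`. -/
noncomputable def wvec {n : ℕ} (q : Fin (n + 1) → ℕ) (δ : ℕ) : Fin n → Fin (n + 1) → ℝ :=
  fun i j => if (j : ℕ) = 0 then -((δ : ℝ) / (q 0 : ℝ))
    else if (j : ℕ) = (i : ℕ) + 1 then (δ : ℝ) / (q j : ℝ) else 0

/-- Adding a linear combination of the other columns to column `0` preserves the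
determinant. -/
lemma det_updateColumn_zero_add_sum {n : ℕ} (A : Matrix (Fin (n + 1)) (Fin (n + 1)) ℝ)
    (c : Fin (n + 1) → ℝ) (s : Finset (Fin (n + 1))) (h0 : 0 ∉ s) :
    Matrix.det (A.updateCol 0 (fun i => A i 0 + ∑ j ∈ s, c j * A i j)) = A.det := by
  induction s using Finset.induction with
  | empty => simp
  | @insert a s ha ih =>
    have ha0 : a ≠ 0 := by rintro rfl; exact h0 (Finset.mem_insert_self 0 s)
    have hs0 : 0 ∉ s := fun h => h0 (Finset.mem_insert_of_mem h)
    set N := A.updateCol 0 (fun i => A i 0 + ∑ j ∈ s, c j * A i j) with hN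
    have hEq : A.updateCol 0 (fun i => A i 0 + ∑ j ∈ insert a s, c j * A i j) =
        N.updateCol 0 (fun i => N i 0 + c a • N i a) := by
      ext i j
      by_cases hj : j = 0
      · subst hj
        have e1 : N i a = A i a := by simp [hN, Matrix.updateCol_apply, ha0]
        have e2 : N i 0 = A i 0 + ∑ j ∈ s, c j * A i j := by
          simp [hN, Matrix.updateCol_apply]
        simp only [Matrix.updateCol_apply, if_pos rfl, e1, e2, Finset.sum_insert ha,
          smul_eq_mul, if_true]
        ring
      · simp [hN, Matrix.updateCol_apply, hj]
    rw [hEq, Matrix.det_updateCol_add_smul_self N (Ne.symm ha0) (c a), hN, ih hs0]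

open Finset in
/-- `|w₁ × ⋯ × wₙ|² = δ^{2n}(q₀²+⋯+qₙ²)/(q₀²⋯qₙ²)`. -/
theorem crossProd_wvec_norm_sq {n : ℕ} (q : Fin (n + 1) → ℕ) (hq : ∀ i, 0 < q i)
    (hgcd : Finset.univ.gcd q = 1) :
    ∑ k, (crossProd (wvec q (Finset.univ.lcm q)) k) ^ 2 =
      ((Finset.univ.lcm q : ℕ) : ℝ) ^ (2 * n) * (∑ i, (q i : ℝ) ^ 2) /
        ∏ i, (q i : ℝ) ^ 2 := by
  set δ := Finset.univ.lcm q with hδ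
  have hq0 : ∀ i, (q i : ℝ) ≠ 0 := fun i => Nat.cast_ne_zero.mpr (hq i).ne'
  set P : ℝ := ∏ i : Fin n, (δ : ℝ) / (q i.succ : ℝ) with hP
  have key : ∀ k, crossProd (wvec q δ) k = ((q k : ℝ) / (q 0 : ℝ)) * P := by
    intro k
    set A : Matrix (Fin (n + 1)) (Fin (n + 1)) ℝ :=
      Matrix.of (Fin.cons (fun j => if j = k then (1 : ℝ) else 0) (wvec q δ)) with hA
    have hA0 : ∀ j, A 0 j = if j = k then (1 : ℝ) else 0 := fun j => rfl
    have hAs : ∀ i j, A (Fin.succ i) j = wvec q δ i j := fun i j => by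
      simp [hA, Fin.cons_succ]
    -- Step 1: the cross product coordinate is the determinant of A
    have h1 : crossProd (wvec q δ) k = A.det := by
      rw [Matrix.det_succ_row_zero, Finset.sum_eq_single k]
      · have hsub : A.submatrix Fin.succ k.succAbove =
            Matrix.of fun i j : Fin n => wvec q δ i (Fin.succAbove k j) := by
          ext i j; simp [Matrix.submatrix_apply, hAs]
        rw [hsub, hA0, if_pos rfl, crossProd]; ring
      · intro j _ hj
        rw [hA0, if_neg hj]; ring
      · intro h; exact absurd (Finset.mem_univ k) h
    -- Step 2: column operation
    set A' : Matrix (Fin (n + 1)) (Fin (n + 1)) ℝ :=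
      A.updateCol 0 (fun i => A i 0 + ∑ j ∈ Finset.univ.erase 0,
        ((q j : ℝ) / (q 0 : ℝ)) * A i j) with hA'
    have h2 : A.det = A'.det := by
      rw [hA', det_updateColumn_zero_add_sum A _ _ (Finset.notMem_erase 0 _)]
    -- Step 3: A' is upper triangular
    have h3 : A'.BlockTriangular id := by
      intro i j hij
      simp only [id] at hij
      rcases Fin.eq_zero_or_eq_succ i with rfl | ⟨i', rfl⟩
      · exact absurd hij (by simp)
      by_cases hj : j = 0
      · subst hj
        rw [hA', Matrix.updateCol_apply, if_pos rfl]
        have hsum : ∑ j ∈ Finset.univ.erase 0, ((q j : ℝ) / (q 0 : ℝ)) * A (Fin.succ i') j =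
            ((q i'.succ : ℝ) / (q 0 : ℝ)) * ((δ : ℝ) / (q i'.succ : ℝ)) := by
          rw [Finset.sum_eq_single (Fin.succ i')]
          · rw [hAs, wvec]
            simp [Fin.val_succ]
          · intro b hb hbne
            have hb0 : (b : ℕ) ≠ 0 := fun h => (Finset.mem_erase.mp hb).1 (Fin.ext h)
            have hb1 : (b : ℕ) ≠ (i' : ℕ) + 1 := fun h => hbne (Fin.ext (by simpa using h))
            rw [hAs, wvec]
            simp [hb0, hb1]
          · intro h
            exact absurd (Finset.mem_erase.mpr ⟨Fin.succ_ne_zero i', Finset.mem_univ _⟩) h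
        have e3 : ((q i'.succ : ℝ) / (q 0 : ℝ)) * ((δ : ℝ) / (q i'.succ : ℝ)) =
            (δ : ℝ) / (q 0 : ℝ) := by
          rw [div_mul_div_comm, mul_comm ((q 0 : ℝ)) ((q i'.succ : ℝ))]
          exact mul_div_mul_left _ _ (hq0 i'.succ)
        rw [hsum, hAs, wvec, e3]
        simp
      · rw [hA', Matrix.updateCol_apply, if_neg hj, hAs, wvec]
        have hjv : (j : ℕ) ≠ 0 := fun h => hj (Fin.ext h)
        have hjv2 : (j : ℕ) ≠ (i' : ℕ) + 1 := by
          have := Fin.lt_def.mp hij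
          simp only [Fin.val_succ] at this
          omega
        simp [hjv, hjv2]
    -- Step 4: determinant of the upper triangular matrix
    have h4 : A'.det = ((q k : ℝ) / (q 0 : ℝ)) * P := by
      rw [Matrix.det_of_upperTriangular h3, Fin.prod_univ_succ]
      have hd0 : A' 0 0 = (q k : ℝ) / (q 0 : ℝ) := by
        rw [hA', Matrix.updateCol_apply, if_pos rfl]
        have hsum : ∑ j ∈ Finset.univ.erase 0, ((q j : ℝ) / (q 0 : ℝ)) * A 0 j =
            if k ∈ Finset.univ.erase 0 then (q k : ℝ) / (q 0 : ℝ) else 0 := by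
          rw [← Finset.sum_ite_eq' (Finset.univ.erase 0) k (fun j => (q j : ℝ) / (q 0 : ℝ))]
          refine Finset.sum_congr rfl fun j _ => ?_
          rw [hA0]
          by_cases h : j = k <;> simp [h]
        rw [hsum, hA0]
        by_cases hk : k = 0
        · subst hk
          simp [div_self (hq0 0)]
        · simp [hk, Ne.symm hk]
      have hds : ∀ i' : Fin n, A' (Fin.succ i') (Fin.succ i') = (δ : ℝ) / (q i'.succ : ℝ) := by
        intro i'
        rw [hA', Matrix.updateCol_apply, if_neg (Fin.succ_ne_zero i').symm.symm, hAs, wvec]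
        simp [Fin.val_succ]
      rw [hd0]
      congr 1
      rw [hP]
      exact Finset.prod_congr rfl fun i' _ => hds i'
    rw [h1, h2, h4]
  -- Final assembly
  have hP2 : P ^ 2 = ((δ : ℕ) : ℝ) ^ (2 * n) / ∏ i : Fin n, (q i.succ : ℝ) ^ 2 := by
    rw [hP, ← Finset.prod_pow]
    simp only [div_pow]
    rw [Finset.prod_div_distrib, Finset.prod_const, Finset.card_univ, Fintype.card_fin,
      ← pow_mul, mul_comm 2 n, mul_comm n 2]
  have hprod : ∏ i : Fin (n + 1), (q i : ℝ) ^ 2 =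
      (q 0 : ℝ) ^ 2 * ∏ i : Fin n, (q i.succ : ℝ) ^ 2 := Fin.prod_univ_succ _
  have hprodn : (∏ i : Fin n, (q i.succ : ℝ) ^ 2) ≠ 0 :=
    Finset.prod_ne_zero_iff.mpr fun i _ => pow_ne_zero 2 (hq0 i.succ)
  calc ∑ k, (crossProd (wvec q δ) k) ^ 2
      = ∑ k, (q k : ℝ) ^ 2 * (P ^ 2 / (q 0 : ℝ) ^ 2) := by
        refine Finset.sum_congr rfl fun k _ => ?_
        rw [key k]; ring
    _ = (∑ k, (q k : ℝ) ^ 2) * (P ^ 2 / (q 0 : ℝ) ^ 2) := by rw [← Finset.sum_mul]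
    _ = ((δ : ℕ) : ℝ) ^ (2 * n) * (∑ i, (q i : ℝ) ^ 2) / ∏ i, (q i : ℝ) ^ 2 := by
        rw [hP2, hprod]
        field_simp
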